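/- (Maximal bounded by oscillation plus fixed-time norms) For any family of measurable functions (a_M)_{M ∈ ℝ₊^k} on a σ-finite measure space X and any p ∈ [1,∞), one has ‖sup_{M ∈ ℝ₊^k} |a_M|‖_{L^p(X)} ≤ sup_{M ∈ ℝ₊^k} ‖a_M‖_{L^p(X)} + sup_{J ∈ ℤ₊} sup_{I ∈ 𝔖_J(ℝ₊^k)} ‖O²_{I,J}(a_M : M ∈ ℝ₊^k)‖_{L^p(X)}. -/

import Mathlib

open Set MeasureTheory ENNReal NNReal

private lemma ennrpow_iSup16 {ι : Sort*} (f : ι → ℝ≥0∞) {y : ℝ} (hy : 0 < y) :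
    (⨆ i, f i) ^ y = ⨆ i, f i ^ y := by
  refine le_antisymm ?_ (iSup_le fun i => ENNReal.rpow_le_rpow (le_iSup f i) hy.le)
  have h1 : (⨆ i, f i) ≤ (⨆ i, f i ^ y) ^ (1/y) := by
    refine iSup_le fun i => ?_
    have : f i = (f i ^ y) ^ (1/y) := by
      rw [← ENNReal.rpow_mul, mul_one_div, div_self hy.ne', ENNReal.rpow_one]
    rw [this]
    exact ENNReal.rpow_le_rpow (le_iSup (fun i => f i ^ y) i) (by positivity)
  calc (⨆ i, f i) ^ y ≤ ((⨆ i, f i ^ y) ^ (1/y)) ^ y :=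
        ENNReal.rpow_le_rpow h1 hy.le
    _ = ⨆ i, f i ^ y := by
        rw [← ENNReal.rpow_mul, one_div_mul_cancel hy.ne', ENNReal.rpow_one]

private lemma ennsq_rpow_half16 (x : ℝ≥0∞) : (x ^ 2) ^ (1/2 : ℝ) = x := by
  rw [← ENNReal.rpow_natCast x 2, ← ENNReal.rpow_mul]
  norm_num

theorem stmt16 {X : Type*} [MeasurableSpace X] (μ : MeasureTheory.Measure X)
    [SigmaFinite μ] (k : ℕ) (hk : 0 < k) (p : ℝ) (hp : 1 ≤ p)
    (a : (Fin k → ℝ) → X → ℂ)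
    (hmeas : ∀ M, Measurable (a M))
    (hcont : ∀ x, Continuous fun M => a M x) :
    (∫⁻ x, (⨆ (M : Fin k → ℝ) (_ : ∀ i, 0 < M i), ((‖a M x‖₊ : ℝ≥0∞))) ^ p ∂μ) ^ (1 / p) ≤
      (⨆ (M : Fin k → ℝ) (_ : ∀ i, 0 < M i),
        (∫⁻ x, ((‖a M x‖₊ : ℝ≥0∞)) ^ p ∂μ) ^ (1 / p)) +
      ⨆ (J : ℕ) (I : Fin (J + 1) → Fin k → ℝ)
        (_ : ∀ (j : Fin (J + 1)) (i : Fin k), 0 < I j i)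
        (_ : ∀ (j : Fin J) (i : Fin k), I j.castSucc i < I j.succ i),
        (∫⁻ x,
          ((∑ j : Fin J,
            ⨆ (M : Fin k → ℝ) (_ : ∀ i, I j.castSucc i ≤ M i ∧ M i < I j.succ i),
              ((‖a M x - a (I j.castSucc) x‖₊ : ℝ≥0∞)) ^ 2) ^ (1 / 2 : ℝ)) ^ p ∂μ)
          ^ (1 / p) := by
  have hp0 : (0:ℝ) < p := lt_of_lt_of_le one_pos hp
  have hip : (0:ℝ) < 1/p := by positivity
  haveI : Nonempty (Fin k) := ⟨⟨0, hk⟩⟩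
  set c : ℕ → ℝ := fun n => 1/(n+1) with hc
  set D : ℕ → ℝ := fun n => (n:ℝ)+2 with hD
  have hcpos : ∀ n, 0 < c n := fun n => by positivity
  have hc1 : ∀ n, c n ≤ 1 := by
    intro n; rw [hc]; rw [div_le_one (by positivity)]; linarith
  have hcD : ∀ n, c n < D n := fun n =>
    lt_of_le_of_lt (hc1 n) (by rw [hD]; push_cast; linarith)
  set P : ℕ → (Fin k → ℚ) → Prop :=
    fun n q => ∀ i, c n ≤ (q i : ℝ) ∧ ((q i : ℝ)) < D n with hPdef
  set qc : (Fin k → ℚ) → (Fin k → ℝ) := fun q i => (q i : ℝ) with hqc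
  set g : ℕ → X → ℝ≥0∞ :=
    fun n x => ⨆ (q : Fin k → ℚ) (_ : P n q), (‖a (qc q) x‖₊ : ℝ≥0∞) with hgdef
  -- Step 1: pointwise bound of maximal function by rational sups
  have step1 : ∀ x, (⨆ (M : Fin k → ℝ) (_ : ∀ i, 0 < M i), (‖a M x‖₊ : ℝ≥0∞)) ≤ ⨆ n, g n x := by
    intro x
    refine iSup₂_le fun M hM => ?_
    refine ENNReal.le_of_forall_pos_le_add fun ε hε _ => ?_
    obtain ⟨δ, hδ, hball⟩ :=
      Metric.continuousAt_iff.mp ((hcont x).continuousAt (x := M)) ε (by exact_mod_cast hε)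
    -- choose n
    have huniv : (Finset.univ : Finset (Fin k)).Nonempty := Finset.univ_nonempty
    set m := Finset.univ.inf' huniv M with hm'
    have hm : 0 < m := (Finset.lt_inf'_iff huniv).mpr fun i _ => hM i
    obtain ⟨n₁, hn₁⟩ := exists_nat_one_div_lt hm
    obtain ⟨n₂, hn₂⟩ := exists_nat_gt (Finset.univ.sup' huniv M)
    set n := max n₁ n₂ with hn
    have hcn : ∀ i, c n < M i := by
      intro i
      have h1 : c n ≤ 1/((n₁:ℝ)+1) := by
        rw [hc]
        apply one_div_le_one_div_of_le (by positivity)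
        have : (n₁:ℝ) ≤ n := by exact_mod_cast le_max_left n₁ n₂
        linarith
      calc c n ≤ 1/((n₁:ℝ)+1) := h1
        _ < m := hn₁
        _ ≤ M i := Finset.inf'_le _ (Finset.mem_univ i)
    have hDn : ∀ i, M i < D n := by
      intro i
      have h2 : (n₂:ℝ) ≤ (n:ℝ) := by exact_mod_cast le_max_right n₁ n₂
      calc M i ≤ Finset.univ.sup' huniv M := Finset.le_sup' _ (Finset.mem_univ i)
        _ < n₂ := hn₂
        _ ≤ D n := by rw [hD]; push_cast; linarith
    have hqex : ∀ i, ∃ q : ℚ, max (c n) (M i - δ/2) < (q:ℝ) ∧ (q:ℝ) < M i := by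
      intro i
      exact exists_rat_btwn (max_lt (hcn i) (by linarith))
    choose q hq1 hq2 using hqex
    have hPq : P n q := by
      intro i
      exact ⟨le_of_lt (lt_of_le_of_lt (le_max_left _ _) (hq1 i)),
        lt_trans (hq2 i) (hDn i)⟩
    have hdist : dist (qc q) M < δ := by
      rw [dist_pi_lt_iff hδ]
      intro i
      rw [Real.dist_eq, abs_lt]
      have h3 := lt_of_le_of_lt (le_max_right (c n) (M i - δ/2)) (hq1 i)
      have h4 := hq2 i
      constructor <;> [skip; skip] <;> simp only [hqc] <;> linarith
    have hdx : dist (a (qc q) x) (a M x) < ε := hball hdist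
    have hnorm : ‖a M x‖ ≤ ‖a (qc q) x‖ + (ε:ℝ) := by
      have h5 := norm_sub_norm_le (a M x) (a (qc q) x)
      rw [dist_comm, dist_eq_norm] at hdx
      linarith
    have hnn : (‖a M x‖₊ : ℝ≥0∞) ≤ (‖a (qc q) x‖₊ : ℝ≥0∞) + (ε : ℝ≥0∞) := by
      rw [← ENNReal.coe_add]
      apply ENNReal.coe_le_coe.mpr
      rw [← NNReal.coe_le_coe]
      push_cast
      simpa using hnorm
    refine hnn.trans (add_le_add_left ?_ _)
    exact le_iSup_of_le n (le_iSup₂_of_le q hPq le_rfl)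
  -- measurability of g
  have hgmeas : ∀ n, Measurable (g n) := by
    intro n
    apply Measurable.iSup
    intro q
    by_cases h : P n q
    · simp only [iSup_pos h]; exact (hmeas _).nnnorm.coe_nnreal_ennreal
    · simp only [iSup_neg h]; exact measurable_const
  -- monotonicity of g
  have hgmono : Monotone g := by
    refine monotone_nat_of_le_succ fun n x => ?_
    refine iSup₂_le fun q hq => le_iSup₂_of_le q ?_ le_rfl
    intro i
    obtain ⟨h1, h2⟩ := hq i
    constructor
    · refine le_trans ?_ h1
      rw [hc]
      apply one_div_le_one_div_of_le (by positivity)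
      push_cast; linarith
    · refine lt_of_lt_of_le h2 ?_
      rw [hD]; push_cast; linarith
  -- the key bound for fixed n
  have key : ∀ n, (∫⁻ x, (g n x) ^ p ∂μ) ^ (1/p) ≤
      (⨆ (M : Fin k → ℝ) (_ : ∀ i, 0 < M i),
        (∫⁻ x, ((‖a M x‖₊ : ℝ≥0∞)) ^ p ∂μ) ^ (1 / p)) +
      ⨆ (J : ℕ) (I : Fin (J + 1) → Fin k → ℝ)
        (_ : ∀ (j : Fin (J + 1)) (i : Fin k), 0 < I j i)
        (_ : ∀ (j : Fin J) (i : Fin k), I j.castSucc i < I j.succ i),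
        (∫⁻ x,
          ((∑ j : Fin J,
            ⨆ (M : Fin k → ℝ) (_ : ∀ i, I j.castSucc i ≤ M i ∧ M i < I j.succ i),
              ((‖a M x - a (I j.castSucc) x‖₊ : ℝ≥0∞)) ^ 2) ^ (1 / 2 : ℝ)) ^ p ∂μ)
          ^ (1 / p) := by

    intro n
    set I0 : Fin k → ℝ := fun _ => c n with hI0
    set Ich : Fin 2 → Fin k → ℝ := fun j _ => if j = 0 then c n else D n with hIch
    set T' : X → ℝ≥0∞ := fun x =>
      (⨆ (q : Fin k → ℚ) (_ : P n q), ((‖a (qc q) x - a I0 x‖₊ : ℝ≥0∞)) ^ 2) ^ (1/2 : ℝ)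
      with hT'
    have hT'meas : Measurable T' := by
      apply Measurable.pow_const
      apply Measurable.iSup
      intro q
      by_cases h : P n q
      · simp only [iSup_pos h]
        exact (((hmeas _).sub (hmeas _)).nnnorm.coe_nnreal_ennreal).pow_const 2
      · simp only [iSup_neg h]; exact measurable_const
    have hpt : ∀ x, g n x ≤ (‖a I0 x‖₊ : ℝ≥0∞) + T' x := by
      intro x
      refine iSup₂_le fun q hq => ?_
      have tri : (‖a (qc q) x‖₊ : ℝ≥0∞) ≤
          (‖a I0 x‖₊ : ℝ≥0∞) + (‖a (qc q) x - a I0 x‖₊ : ℝ≥0∞) := by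
        rw [← ENNReal.coe_add]
        apply ENNReal.coe_le_coe.mpr
        have h6 : a (qc q) x = a I0 x + (a (qc q) x - a I0 x) := by ring
        calc ‖a (qc q) x‖₊ = ‖a I0 x + (a (qc q) x - a I0 x)‖₊ := by rw [← h6]
          _ ≤ _ := nnnorm_add_le _ _
      refine tri.trans (add_le_add_right ?_ _)
      rw [hT', ← ennsq_rpow_half16 ((‖a (qc q) x - a I0 x‖₊ : ℝ≥0∞))]
      exact ENNReal.rpow_le_rpow (le_iSup₂_of_le q hq le_rfl) (by norm_num)
    have hpos2 : ∀ (j : Fin 2) (i : Fin k), 0 < Ich j i := by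
      intro j i
      rw [hIch]
      dsimp only
      split
      · exact hcpos n
      · rw [hD]; positivity
    have e0 : Ich (Fin.castSucc (0 : Fin 1)) = I0 := by
      funext i; simp [hIch, hI0]
    have e1 : Ich (Fin.succ (0 : Fin 1)) = fun _ => D n := by
      funext i; show (if (Fin.succ (0 : Fin 1)) = 0 then c n else D n) = D n; exact if_neg (by decide)
    have hinc2 : ∀ (j : Fin 1) (i : Fin k), Ich j.castSucc i < Ich j.succ i := by
      intro j i
      have hj : j = 0 := Subsingleton.elim _ _
      subst hj
      rw [e0, e1, hI0]
      exact hcD n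
    calc (∫⁻ x, (g n x) ^ p ∂μ) ^ (1/p)
        ≤ (∫⁻ x, ((‖a I0 x‖₊ : ℝ≥0∞) + T' x) ^ p ∂μ) ^ (1/p) := by
          gcongr
          exact hpt _
      _ ≤ (∫⁻ x, ((‖a I0 x‖₊ : ℝ≥0∞)) ^ p ∂μ) ^ (1/p) +
          (∫⁻ x, (T' x) ^ p ∂μ) ^ (1/p) :=
          ENNReal.lintegral_Lp_add_le (hmeas I0).nnnorm.coe_nnreal_ennreal.aemeasurable
            hT'meas.aemeasurable hp
      _ ≤ _ := by
          apply add_le_add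
          · exact le_iSup₂_of_le I0 (fun i => hcpos n) le_rfl
          · refine le_trans ?_ (le_iSup_of_le 1 (le_iSup_of_le Ich
              (le_iSup_of_le hpos2 (le_iSup_of_le hinc2 le_rfl))))
            gcongr with x
            rw [Fin.sum_univ_one, e0, e1, hT']
            apply ENNReal.rpow_le_rpow _ (by norm_num)
            refine iSup₂_le fun q hq => ?_
            refine le_iSup₂_of_le (qc q) ?_ le_rfl
            intro i
            rw [hI0]
            exact hq i
  -- assembling
  calc (∫⁻ x, (⨆ (M : Fin k → ℝ) (_ : ∀ i, 0 < M i), ((‖a M x‖₊ : ℝ≥0∞))) ^ p ∂μ) ^ (1 / p)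
      ≤ (∫⁻ x, (⨆ n, g n x) ^ p ∂μ) ^ (1/p) := by
        gcongr
        exact step1 _
    _ = (⨆ n, ∫⁻ x, (g n x) ^ p ∂μ) ^ (1/p) := by
        congr 1
        rw [← lintegral_iSup (fun n => (hgmeas n).pow_const p)
          (fun m n h x => ENNReal.rpow_le_rpow (hgmono h x) hp0.le)]
        congr 1
        funext x
        exact ennrpow_iSup16 (fun n => g n x) hp0
    _ = ⨆ n, (∫⁻ x, (g n x) ^ p ∂μ) ^ (1/p) := ennrpow_iSup16 _ hip
    _ ≤ _ := iSup_le key
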